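/- Let X have at least 3 elements, T a t-norm, N a nonempty society, P a strict preference operator, and 𝔘 an ultrafilter on N. Then there exists an aggregation function f : LP_T^N → LP_T satisfying independence of irrelevant alternatives and strongly Paretian with respect to P whose set of decisive coalitions is exactly 𝔘. In particular, the function defined by f(𝐑)(x,y) = 1 if {i ∈ N : x ≻_{R_i} y} ∈ 𝔘, f(𝐑)(x,y) = 0 if {i ∈ N : y ≻_{R_i} x} ∈ 𝔘, and f(𝐑)(x,y) = 1 otherwise, maps every profile to a T-linear preference and has these properties. -/

import Mathlib

open unitInterval

/-- A t-norm on the unit interval: commutative, associative, monotone, with 1 as neutral element. -/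
def IsTnorm (T : I → I → I) : Prop :=
  (∀ a b, T a b = T b a) ∧
  (∀ a b c, T (T a b) c = T a (T b c)) ∧
  (∀ a b c d, a ≤ b → c ≤ d → T a c ≤ T b d) ∧
  (∀ a, T a 1 = a)

/-- A fuzzy preference `R` is reflexive. -/
def FuzzyRefl {X : Type*} (R : X → X → I) : Prop := ∀ x, R x x = 1

/-- A fuzzy preference `R` is `T`-transitive. -/
def FuzzyTrans {X : Type*} (T : I → I → I) (R : X → X → I) : Prop :=
  ∀ x y z, T (R x y) (R y z) ≤ R x z

/-- A fuzzy preference `R` is complete. -/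
def FuzzyComplete {X : Type*} (R : X → X → I) : Prop := ∀ x y, R x y = 1 ∨ R y x = 1

/-- A `T`-linear fuzzy preference: reflexive, complete and `T`-transitive. -/
def IsLinearPref {X : Type*} (T : I → I → I) (R : X → X → I) : Prop :=
  FuzzyRefl R ∧ FuzzyComplete R ∧ FuzzyTrans T R

/-- The set of `T`-linear preferences on `X`. -/
def LinPref (T : I → I → I) (X : Type*) := {R : X → X → I // IsLinearPref T R}

/-- The strict part of the associated preorder of `R`: `x ≻_R y` iff `R x y = 1` and `R y x < 1`. -/
def SP {X : Type*} (R : X → X → I) (x y : X) : Prop := R x y = 1 ∧ R y x < 1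

/-- Independence of irrelevant alternatives for an aggregation function. -/
def IIA {X N : Type*} {T : I → I → I} (f : (N → LinPref T X) → LinPref T X) : Prop :=
  ∀ (R R' : N → LinPref T X) (x y : X),
    (∀ i, (R i).1 x y = (R' i).1 x y ∧ (R i).1 y x = (R' i).1 y x) →
    (f R).1 x y = (f R').1 x y ∧ (f R).1 y x = (f R').1 y x

/-- Weak Pareto: if every individual strictly prefers `x` to `y`
(`R_i(x,y) > R_i(y,x)`), so does the society. -/
def WeakPareto {X N : Type*} {T : I → I → I} (f : (N → LinPref T X) → LinPref T X) : Prop :=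
  ∀ (R : N → LinPref T X) (x y : X),
    (∀ i, (R i).1 y x < (R i).1 x y) → (f R).1 y x < (f R).1 x y

/-- A coalition `C` is decisive for `f`. -/
def Decisive {X N : Type*} {T : I → I → I} (f : (N → LinPref T X) → LinPref T X)
    (C : Set N) : Prop :=
  ∀ (x y : X) (R : N → LinPref T X),
    (∀ i ∈ C, SP (R i).1 x y) → (∀ i ∈ Cᶜ, SP (R i).1 y x) → SP (f R).1 x y

/-- A strict preference operator: assigns to each fuzzy preference `R` a fuzzy strict
preference `P R`, satisfying the three properties required in the paper. -/
def IsSPO {X : Type*} (P : (X → X → I) → X → X → I) : Prop :=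
  (∀ (R : X → X → I) (x y : X), R x y = 1 → R y x = 0 → P R x y = 1) ∧
  (∀ (R : X → X → I) (x y : X), 0 < P R x y ↔ R y x < R x y) ∧
  (∀ (R R' : X → X → I) (x y a b : X),
    R' a b ≤ R x y → R y x ≤ R' b a → P R' a b ≤ P R x y)

/-- Strong Pareto with respect to a strict preference operator `P`. -/
def StrongPareto {X N : Type*} {T : I → I → I} (P : (X → X → I) → X → X → I)
    (f : (N → LinPref T X) → LinPref T X) : Prop :=
  ∀ (R : N → LinPref T X) (x y : X),
    ⨅ i : N, (P (R i).1 x y : ℝ) ≤ (P (f R).1 x y : ℝ)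

open scoped Classical


section AuxUltra

variable {X N : Type*}

lemma Tnorm.one_one {T : I → I → I} (hT : IsTnorm T) : T 1 1 = 1 := hT.2.2.2 1

lemma Tnorm.zero_right {T : I → I → I} (hT : IsTnorm T) (a : I) : T a 0 = 0 := by
  refine le_antisymm ?_ nonneg'
  calc T a 0 ≤ T 1 0 := hT.2.2.1 a 1 0 0 le_one' le_rfl
    _ = T 0 1 := hT.1 1 0
    _ = 0 := hT.2.2.2 0

lemma Tnorm.zero_left {T : I → I → I} (hT : IsTnorm T) (a : I) : T 0 a = 0 := by
  rw [hT.1]; exact Tnorm.zero_right hT a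

lemma SP.asymm {R : X → X → I} {x y : X} (h : SP R x y) : ¬ SP R y x :=
  fun h' => absurd h'.1 (ne_of_lt h.2)

/-- The crisp preference that puts `x` strictly on top and everything else tied. -/
noncomputable def crispTop (x : X) : X → X → I :=
  fun a b => if b = x ∧ a ≠ x then 0 else 1

lemma crispTop_linear {T : I → I → I} (hT : IsTnorm T) (x : X) :
    IsLinearPref T (crispTop x) := by
  refine ⟨fun a => ?_, fun a b => ?_, fun a b c => ?_⟩
  · simp only [crispTop]; rw [if_neg]; rintro ⟨h1, h2⟩; exact h2 h1
  · by_cases h : b = x ∧ a ≠ x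
    · right; simp only [crispTop]; rw [if_neg]; rintro ⟨ha, _⟩; exact h.2 ha
    · left; simp only [crispTop]; rw [if_neg h]
  · by_cases h : c = x ∧ a ≠ x
    · have hac : crispTop x a c = 0 := if_pos h
      rw [hac]
      by_cases hb : b = x
      · have : crispTop x a b = 0 := if_pos ⟨hb, h.2⟩
        rw [this, Tnorm.zero_left hT]
      · have : crispTop x b c = 0 := if_pos ⟨h.1, hb⟩
        rw [this, Tnorm.zero_right hT]
    · have : crispTop x a c = 1 := if_neg h
      rw [this]; exact le_one'

lemma SP_crispTop {x y : X} (hxy : x ≠ y) : SP (crispTop x) x y := by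
  constructor
  · simp only [crispTop]; rw [if_neg]; rintro ⟨h1, _⟩; exact hxy h1.symm
  · have : crispTop x y x = 0 := if_pos ⟨rfl, fun h => hxy h.symm⟩
    rw [this]; exact zero_lt_one

/-- The crisp ultrafilter aggregation rule. -/
noncomputable def aggFun (𝔘 : Ultrafilter N) (R : N → X → X → I) : X → X → I :=
  fun x y => if {i : N | SP (R i) x y} ∈ 𝔘 then 1
    else if {i : N | SP (R i) y x} ∈ 𝔘 then 0 else 1

lemma agg_not_both (𝔘 : Ultrafilter N) (R : N → X → X → I) {x y : X}
    (h : {i : N | SP (R i) x y} ∈ 𝔘) : {i : N | SP (R i) y x} ∉ 𝔘 := by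
  intro h'
  have hmem := 𝔘.toFilter.inter_mem h h'
  have : {i : N | SP (R i) x y} ∩ {i : N | SP (R i) y x} = ∅ := by
    ext i; simp only [Set.mem_inter_iff, Set.mem_setOf_eq, Set.mem_empty_iff_false, iff_false]
    rintro ⟨h1, h2⟩; exact SP.asymm h1 h2
  rw [this] at hmem
  exact Ultrafilter.empty_notMem hmem

lemma agg_eq_one_of_mem (𝔘 : Ultrafilter N) (R : N → X → X → I) {x y : X}
    (h : {i : N | SP (R i) x y} ∈ 𝔘) : aggFun 𝔘 R x y = 1 := if_pos h

lemma agg_eq_zero_iff (𝔘 : Ultrafilter N) (R : N → X → X → I) {x y : X} :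
    aggFun 𝔘 R x y = 0 ↔ {i : N | SP (R i) y x} ∈ 𝔘 := by
  unfold aggFun
  constructor
  · intro h
    split_ifs at h with h1 h2
    · exact absurd h one_ne_zero
    · exact h2
    · exact absurd h one_ne_zero
  · intro h
    rw [if_neg (fun h1 => agg_not_both 𝔘 R h1 h), if_pos h]

lemma agg_cases (𝔘 : Ultrafilter N) (R : N → X → X → I) (x y : X) :
    aggFun 𝔘 R x y = 0 ∨ aggFun 𝔘 R x y = 1 := by
  unfold aggFun; split_ifs <;> simp

lemma agg_linear {T : I → I → I} (hT : IsTnorm T) (𝔘 : Ultrafilter N)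
    (R : N → LinPref T X) : IsLinearPref T (aggFun 𝔘 (fun i => (R i).1)) := by
  refine ⟨fun x => ?_, fun x y => ?_, fun x y z => ?_⟩
  · have hempty : {i : N | SP (R i).1 x x} = ∅ := by
      ext i; simp only [Set.mem_setOf_eq, Set.mem_empty_iff_false, iff_false]
      rintro ⟨h1, h2⟩; exact absurd h1 (ne_of_lt h2)
    unfold aggFun
    rw [if_neg, if_neg] <;> rw [hempty] <;> exact Ultrafilter.empty_notMem
  · rcases agg_cases 𝔘 (fun i => (R i).1) x y with h | h
    · right
      have hm := (agg_eq_zero_iff 𝔘 _).mp h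
      exact agg_eq_one_of_mem 𝔘 _ hm
    · left; exact h
  · rcases agg_cases 𝔘 (fun i => (R i).1) x z with h0 | h1
    · rw [h0]
      have hzx : {i : N | SP (R i).1 z x} ∈ 𝔘 := (agg_eq_zero_iff 𝔘 _).mp h0
      have hsub : {i : N | SP (R i).1 z x} ⊆
          {i : N | SP (R i).1 z y} ∪ {i : N | SP (R i).1 y x} := by
        intro i hi
        simp only [Set.mem_setOf_eq] at hi
        by_cases hyz : (R i).1 y z = 1
        · right
          have hyx : (R i).1 y x = 1 := by
            have htr := (R i).2.2.2 y z x
            rw [hyz, hi.1, Tnorm.one_one hT] at htr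
            exact le_antisymm le_one' htr
          refine ⟨hyx, ?_⟩
          by_contra hxy
          have hxy' : (R i).1 x y = 1 :=
            le_antisymm le_one' (not_lt.mp hxy)
          have htr := (R i).2.2.2 x y z
          rw [hxy', hyz, Tnorm.one_one hT] at htr
          exact absurd (le_antisymm le_one' htr) (ne_of_lt hi.2)
        · left
          have hzy : (R i).1 z y = 1 := by
            rcases (R i).2.2.1 z y with h | h
            · exact h
            · exact absurd h hyz
          exact ⟨hzy, lt_of_le_of_ne le_one' hyz⟩
      have hor : {i : N | SP (R i).1 z y} ∈ 𝔘 ∨ {i : N | SP (R i).1 y x} ∈ 𝔘 := by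
        rw [← Ultrafilter.union_mem_iff]
        exact 𝔘.toFilter.mem_of_superset hzx hsub
      rcases hor with h | h
      · have : aggFun 𝔘 (fun i => (R i).1) y z = 0 := (agg_eq_zero_iff 𝔘 _).mpr h
        rw [this, Tnorm.zero_right hT]
      · have : aggFun 𝔘 (fun i => (R i).1) x y = 0 := (agg_eq_zero_iff 𝔘 _).mpr h
        rw [this, Tnorm.zero_left hT]
    · rw [h1]; exact le_one'

end AuxUltra

/-- Theorem `existenceFromU`: every ultrafilter `𝔘` on `N` is the set of
decisive coalitions of some IIA, strongly Paretian aggregation function; in particular the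
explicit crisp rule described in the paper works. -/
theorem aggregation_from_ultrafilter {X N : Type*}
    (hX : ∃ x y z : X, x ≠ y ∧ x ≠ z ∧ y ≠ z) [Nonempty N]
    (T : I → I → I) (hT : IsTnorm T)
    (P : (X → X → I) → X → X → I) (hP : IsSPO P)
    (𝔘 : Ultrafilter N) :
    ∃ f : (N → LinPref T X) → LinPref T X,
      IIA f ∧ StrongPareto P f ∧
      (∀ C : Set N, Decisive f C ↔ C ∈ 𝔘) ∧
      (∀ (R : N → LinPref T X) (x y : X),
        (f R).1 x y =
          if {i : N | SP (R i).1 x y} ∈ 𝔘 then 1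
          else if {i : N | SP (R i).1 y x} ∈ 𝔘 then 0 else 1) := by
  classical
  refine ⟨fun R => ⟨aggFun 𝔘 (fun i => (R i).1), agg_linear hT 𝔘 R⟩, ?_, ?_, ?_, ?_⟩
  · -- IIA
    intro R R' x y h
    have hxy : {i : N | SP (R i).1 x y} = {i : N | SP (R' i).1 x y} := by
      ext i; simp only [Set.mem_setOf_eq, SP, (h i).1, (h i).2]
    have hyx : {i : N | SP (R i).1 y x} = {i : N | SP (R' i).1 y x} := by
      ext i; simp only [Set.mem_setOf_eq, SP, (h i).1, (h i).2]
    constructor <;> simp only [aggFun, hxy, hyx]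
  · -- StrongPareto
    intro R x y
    set F := aggFun 𝔘 (fun i => (R i).1) with hF
    have hbdd : BddBelow (Set.range fun i => ((P (R i).1 x y : I) : ℝ)) := by
      refine ⟨0, ?_⟩
      rintro r ⟨i, rfl⟩
      exact (P (R i).1 x y).2.1
    by_cases h1 : {i : N | SP (R i).1 x y} ∈ 𝔘
    · -- societal strict preference: P (f R) x y = 1
      have hfxy : F x y = 1 := agg_eq_one_of_mem 𝔘 _ h1
      have hfyx : F y x = 0 := (agg_eq_zero_iff 𝔘 _).mpr h1
      have hPf : P F x y = 1 := hP.1 F x y hfxy hfyx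
      rw [hPf]
      obtain i0 := Classical.arbitrary N
      calc (⨅ i : N, ((P (R i).1 x y : I) : ℝ)) ≤ ((P (R i0).1 x y : I) : ℝ) :=
            ciInf_le hbdd i0
        _ ≤ 1 := (P (R i0).1 x y).2.2
        _ = ((1 : I) : ℝ) := by norm_num
    · -- find an individual with P (R i) x y = 0
      have hex : ∃ i : N, (R i).1 x y ≤ (R i).1 y x := by
        by_cases h2 : {i : N | SP (R i).1 y x} ∈ 𝔘
        · obtain ⟨i, hi⟩ := Ultrafilter.nonempty_of_mem h2
          exact ⟨i, le_of_lt (lt_of_lt_of_le hi.2 (le_of_eq hi.1.symm))⟩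
        · have hc : {i : N | SP (R i).1 x y}ᶜ ∈ 𝔘 := (Ultrafilter.compl_mem_iff_notMem).mpr h1
          obtain ⟨i, hi⟩ := Ultrafilter.nonempty_of_mem hc
          refine ⟨i, ?_⟩
          by_cases hyx : (R i).1 y x = 1
          · rw [hyx]; exact le_one'
          · exfalso
            have hxy1 : (R i).1 x y = 1 := by
              rcases (R i).2.2.1 x y with h | h
              · exact h
              · exact absurd h hyx
            exact hi ⟨hxy1, lt_of_le_of_ne le_one' hyx⟩
      obtain ⟨i, hi⟩ := hex
      have hPi : P (R i).1 x y = 0 := by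
        refine le_antisymm (not_lt.mp ?_) nonneg'
        rw [hP.2.1]
        exact not_lt.mpr hi
      calc (⨅ j : N, ((P (R j).1 x y : I) : ℝ)) ≤ ((P (R i).1 x y : I) : ℝ) :=
            ciInf_le hbdd i
        _ = 0 := by rw [hPi]; norm_num
        _ ≤ ((P F x y : I) : ℝ) := (P F x y).2.1
  · -- decisive coalitions = 𝔘
    intro C
    constructor
    · intro hD
      obtain ⟨x, y, z, hxy, _, _⟩ := hX
      set R : N → LinPref T X := fun i =>
        if i ∈ C then ⟨crispTop x, crispTop_linear hT x⟩
        else ⟨crispTop y, crispTop_linear hT y⟩ with hR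
      have h1 : ∀ i ∈ C, SP (R i).1 x y := by
        intro i hi
        simp only [hR, hi, ↓reduceIte]
        exact SP_crispTop hxy
      have h2 : ∀ i ∈ Cᶜ, SP (R i).1 y x := by
        intro i hi
        have hi' : i ∉ C := hi
        simp only [hR, hi', ↓reduceIte]
        exact SP_crispTop hxy.symm
      have hsp : SP (aggFun 𝔘 (fun i => (R i).1)) x y := hD x y R h1 h2
      have hne : aggFun 𝔘 (fun i => (R i).1) x y ≠ 0 := by
        rw [hsp.1]; exact one_ne_zero
      have hnm : {i : N | SP (R i).1 y x} ∉ 𝔘 := fun hm =>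
        hne ((agg_eq_zero_iff 𝔘 _).mpr hm)
      have hsub : Cᶜ ⊆ {i : N | SP (R i).1 y x} := fun i hi => h2 i hi
      have : Cᶜ ∉ 𝔘 := fun hm => hnm (𝔘.toFilter.mem_of_superset hm hsub)
      exact Ultrafilter.compl_notMem_iff.mp this
    · intro hC x y R h1 h2
      have hm : {i : N | SP (R i).1 x y} ∈ 𝔘 :=
        𝔘.toFilter.mem_of_superset hC (fun i hi => h1 i hi)
      show SP (aggFun 𝔘 (fun i => (R i).1)) x y
      constructor
      · exact agg_eq_one_of_mem 𝔘 _ hm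
      · have : aggFun 𝔘 (fun i => (R i).1) y x = 0 := (agg_eq_zero_iff 𝔘 _).mpr hm
        rw [this]; exact zero_lt_one
  · -- the explicit formula
    intro R x y
    rfl
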